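/- Let ε* = ln( (−5 + 2·(6353 − 405√241)^{1/3} + 2·(6353 + 405√241)^{1/3}) / 27 ). Then the quantity g(ε) = (e^{ε/2}+3)/(3(e^{ε/2}−1)²) − ((e^ε+1)/(e^ε−1))² satisfies: g(ε) > 0 for all 0 < ε < ε*, g(ε*) = 0, and g(ε) < 0 for all ε > ε*. -/

import Mathlib

open Real

/-- `ε* = ln((−5 + 2·(6353 − 405√241)^{1/3} + 2·(6353 + 405√241)^{1/3}) / 27)`. -/
noncomputable def epsStar : ℝ :=
  Real.log ((-5 + 2 * (6353 - 405 * Real.sqrt 241) ^ ((1 : ℝ) / 3) +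
      2 * (6353 + 405 * Real.sqrt 241) ^ ((1 : ℝ) / 3)) / 27)

/-- `g(ε) = (e^{ε/2}+3)/(3(e^{ε/2}−1)²) − ((e^ε+1)/(e^ε−1))²`. -/
noncomputable def gFun (ε : ℝ) : ℝ :=
  (exp (ε / 2) + 3) / (3 * (exp (ε / 2) - 1) ^ 2) - ((exp ε + 1) / (exp ε - 1)) ^ 2

/-- The argument of the logarithm in `epsStar`. -/
noncomputable def sVal : ℝ :=
  (-5 + 2 * (6353 - 405 * Real.sqrt 241) ^ ((1 : ℝ) / 3) +
      2 * (6353 + 405 * Real.sqrt 241) ^ ((1 : ℝ) / 3)) / 27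

lemma cube_aux {x : ℝ} (hx : 0 ≤ x) : (x ^ ((1:ℝ)/3)) ^ (3:ℕ) = x := by
  rw [← Real.rpow_natCast (x ^ ((1:ℝ)/3)) 3, ← Real.rpow_mul hx]
  norm_num

lemma sqrt241_sq : Real.sqrt 241 ^ 2 = 241 := Real.sq_sqrt (by norm_num)

lemma sqrt241_le : 405 * Real.sqrt 241 ≤ 6353 := by
  nlinarith [sqrt241_sq, Real.sqrt_nonneg (241:ℝ)]

lemma sVal_cubic : 9 * sVal ^ 3 + 5 * sVal ^ 2 - 13 * sVal - 49 = 0 := by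
  have h1 : (0:ℝ) ≤ 6353 - 405 * Real.sqrt 241 := by linarith [sqrt241_le]
  have h2 : (0:ℝ) ≤ 6353 + 405 * Real.sqrt 241 := by
    have := Real.sqrt_nonneg (241:ℝ); linarith
  set A : ℝ := (6353 - 405 * Real.sqrt 241) ^ ((1:ℝ)/3) with hA
  set B : ℝ := (6353 + 405 * Real.sqrt 241) ^ ((1:ℝ)/3) with hB
  have hA3 : A ^ (3:ℕ) = 6353 - 405 * Real.sqrt 241 := cube_aux h1
  have hB3 : B ^ (3:ℕ) = 6353 + 405 * Real.sqrt 241 := cube_aux h2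
  have hA0 : 0 ≤ A := Real.rpow_nonneg h1 _
  have hB0 : 0 ≤ B := Real.rpow_nonneg h2 _
  have hAB : A * B = 94 := by
    have : A * B = ((6353 - 405 * Real.sqrt 241) * (6353 + 405 * Real.sqrt 241)) ^ ((1:ℝ)/3) := by
      rw [Real.mul_rpow h1 h2]
    rw [this]
    have hprod : (6353 - 405 * Real.sqrt 241) * (6353 + 405 * Real.sqrt 241) = 830584 := by
      nlinarith [sqrt241_sq]
    rw [hprod]
    have : ((830584:ℝ)) = (94:ℝ) ^ (3:ℕ) := by norm_num
    rw [this, ← Real.rpow_natCast (94:ℝ) 3, ← Real.rpow_mul (by norm_num)]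
    norm_num
  have hs : sVal = (-5 + 2*A + 2*B) / 27 := rfl
  rw [hs]
  push_cast at hA3 hB3
  linear_combination (8/2187 : ℝ) * hA3 + (8/2187 : ℝ) * hB3 + ((24*A + 24*B)/2187) * hAB

lemma sVal_gt_one : 1 < sVal := by
  have h1 : (0:ℝ) ≤ 6353 - 405 * Real.sqrt 241 := by linarith [sqrt241_le]
  have h2 : (0:ℝ) ≤ 6353 + 405 * Real.sqrt 241 := by
    have := Real.sqrt_nonneg (241:ℝ); linarith
  set A : ℝ := (6353 - 405 * Real.sqrt 241) ^ ((1:ℝ)/3) with hA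
  set B : ℝ := (6353 + 405 * Real.sqrt 241) ^ ((1:ℝ)/3) with hB
  have hA0 : 0 ≤ A := Real.rpow_nonneg h1 _
  have hB0 : 0 ≤ B := Real.rpow_nonneg h2 _
  have hB3 : B ^ (3:ℕ) = 6353 + 405 * Real.sqrt 241 := cube_aux h2
  have hB3' : (4096:ℝ) < B ^ (3:ℕ) := by
    rw [hB3]; have := Real.sqrt_nonneg (241:ℝ); nlinarith
  have hB16 : 16 < B := by nlinarith [sq_nonneg (B - 16), sq_nonneg (B + 16)]
  have hs : sVal = (-5 + 2*A + 2*B) / 27 := rfl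
  rw [hs]; linarith

lemma exp_epsStar : Real.exp epsStar = sVal := by
  have : epsStar = Real.log sVal := rfl
  rw [this, Real.exp_log (by linarith [sVal_gt_one])]

/-- t = exp(epsStar/2) satisfies the cubic 3t³ − t² + t − 7 = 0 and t > 1. -/
lemma key_t : 1 < Real.exp (epsStar / 2) ∧
    3 * Real.exp (epsStar / 2) ^ 3 - Real.exp (epsStar / 2) ^ 2 + Real.exp (epsStar / 2) - 7 = 0 := by
  set t : ℝ := Real.exp (epsStar / 2) with ht
  have ht2 : t ^ 2 = sVal := by
    rw [ht, sq, ← Real.exp_add, show epsStar/2 + epsStar/2 = epsStar by ring, exp_epsStar]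
  have ht1 : 1 < t := by
    nlinarith [Real.exp_pos (epsStar / 2), sVal_gt_one, sq_nonneg (t - 1), sq_nonneg (t + 1)]
  refine ⟨ht1, ?_⟩
  have hc : 9 * (t^2) ^ 3 + 5 * (t^2) ^ 2 - 13 * t^2 - 49 = 0 := by
    rw [ht2]; exact sVal_cubic
  have hfac : (3*t^3 - t^2 + t - 7) * (3*t^3 + t^2 + t + 7) = 0 := by
    linear_combination hc
  rcases mul_eq_zero.mp hfac with h | h
  · exact h
  · nlinarith
  
lemma gFun_eq (ε : ℝ) (hu : 1 < Real.exp (ε/2)) :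
    gFun ε = (exp (ε/2) * (-3*exp (ε/2)^3 + exp (ε/2)^2 - exp (ε/2) + 7)) /
      (3 * (exp (ε/2) - 1)^2 * (exp (ε/2) + 1)^2) := by
  have hv : exp ε = exp (ε/2) * exp (ε/2) := by
    rw [← Real.exp_add]; ring_nf
  set u := exp (ε/2) with hudef
  have hu1 : u - 1 ≠ 0 := by intro h; nlinarith
  have hu2 : u + 1 ≠ 0 := by intro h; nlinarith
  have hu3 : u * u - 1 ≠ 0 := by intro h; nlinarith
  unfold gFun
  rw [← hudef, hv]
  rw [div_pow, div_sub_div _ _ (by positivity) (pow_ne_zero 2 hu3), div_eq_div_iff (mul_ne_zero (by positivity) (pow_ne_zero 2 hu3)) (by positivity)]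
  ring

/-- Sign characterization of `g`: positive on `(0, ε*)`, zero at `ε*`, negative on `(ε*, ∞)`. -/
theorem stmt_9 :
    (∀ ε : ℝ, 0 < ε → ε < epsStar → 0 < gFun ε) ∧
    gFun epsStar = 0 ∧
    (∀ ε : ℝ, epsStar < ε → gFun ε < 0) := by
  obtain ⟨ht1, htq⟩ := key_t
  set t : ℝ := Real.exp (epsStar / 2) with ht
  refine ⟨?_, ?_, ?_⟩
  · intro ε hε0 hεs
    have hu : 1 < Real.exp (ε/2) := by
      rw [show (1:ℝ) = Real.exp 0 by simp]
      exact Real.exp_lt_exp.mpr (by linarith)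
    set u := Real.exp (ε/2) with hu'
    have hut : u < t := Real.exp_lt_exp.mpr (by linarith)
    rw [gFun_eq ε hu, ← hu']
    have hnum : 0 < u * (-3*u^3 + u^2 - u + 7) := by
      have hq : 0 < -3*u^3 + u^2 - u + 7 := by
        nlinarith [mul_pos (sub_pos.mpr hut) (mul_pos (sub_pos.mpr hu) (sub_pos.mpr ht1)),
          sq_nonneg (t - u), sq_nonneg (t + u), mul_pos (sub_pos.mpr hut) (sub_pos.mpr hut)]
      positivity
    have hden : 0 < 3 * (u - 1)^2 * (u + 1)^2 := by
      have h1 : u - 1 > 0 := by linarith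
      positivity
    exact div_pos hnum hden
  · rw [gFun_eq epsStar ht1, ← ht]
    have : -3*t^3 + t^2 - t + 7 = 0 := by linarith
    rw [this]
    simp
  · intro ε hεs
    have hεs0 : 0 < epsStar := by
      rw [show (0:ℝ) = Real.log 1 by simp]
      exact Real.log_lt_log (by norm_num) sVal_gt_one
    have hu : 1 < Real.exp (ε/2) := by
      rw [show (1:ℝ) = Real.exp 0 by simp]
      exact Real.exp_lt_exp.mpr (by linarith)
    set u := Real.exp (ε/2) with hu'
    have hut : t < u := Real.exp_lt_exp.mpr (by linarith)
    rw [gFun_eq ε hu, ← hu']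
    have hnum : u * (-3*u^3 + u^2 - u + 7) < 0 := by
      have hq : -3*u^3 + u^2 - u + 7 < 0 := by
        nlinarith [mul_pos (sub_pos.mpr hut) (mul_pos (sub_pos.mpr hu) (sub_pos.mpr ht1)),
          sq_nonneg (u - t), sq_nonneg (u + t), mul_pos (sub_pos.mpr hut) (sub_pos.mpr hut)]
      have hu0 : 0 < u := by linarith
      nlinarith
    have hden : 0 < 3 * (u - 1)^2 * (u + 1)^2 := by
      have h1 : u - 1 > 0 := by linarith
      positivity
    exact div_neg_of_neg_of_pos hnum hden
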